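/- Let E be a real reflexive Banach space, X ⊆ E a closed convex set, f : X → X sequentially weakly-strongly continuous with limsup_{‖x‖→∞} ‖f(x)‖/‖x‖ < 1/2, and assume that for each y ∈ X the function x ↦ ‖x − f(x)‖ − ‖y − f(x)‖ has at most one global minimum in X. Then f has a unique fixed point x* ∈ X, and moreover ‖x* − f(x)‖ < ‖x − f(x)‖ for all x ∈ X with x ≠ x*. -/

import Mathlib

open Filter Topology Bornology

private lemma seq_weak_mem {E : Type*} [NormedAddCommGroup E] [NormedSpace ℝ E]
    {X : Set E} (hclosed : IsClosed X) (hconv : Convex ℝ X)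
    {u : ℕ → E} (hu : ∀ n, u n ∈ X) {z : E}
    (hw : ∀ φ : E →L[ℝ] ℝ, Filter.Tendsto (fun n => φ (u n)) Filter.atTop (nhds (φ z))) :
    z ∈ X := by
  by_contra hz
  obtain ⟨φ, s, hφz, hφX⟩ := geometric_hahn_banach_point_closed hconv hclosed hz
  have h1 : s ≤ φ z :=
    ge_of_tendsto (hw φ) (Filter.Eventually.of_forall fun n => (hφX _ (hu n)).le)
  linarith

private lemma seq_wlsc {E : Type*} [NormedAddCommGroup E] [NormedSpace ℝ E]
    {u : ℕ → E} {z : E}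
    (hw : ∀ φ : E →L[ℝ] ℝ, Filter.Tendsto (fun n => φ (u n)) Filter.atTop (nhds (φ z)))
    {v : ℕ → E} {l : E} (hv : Filter.Tendsto v Filter.atTop (nhds l))
    {ε : ℝ} (hε : 0 < ε) :
    ∃ N, ∀ n ≥ N, ‖z - l‖ - ε ≤ ‖u n - v n‖ := by
  rcases eq_or_ne (z - l) 0 with h0 | h0
  · refine ⟨0, fun n _ => ?_⟩
    rw [h0, norm_zero]
    linarith [norm_nonneg (u n - v n)]
  · obtain ⟨φ, hφ1, hφ2⟩ := exists_dual_vector ℝ (z - l) (norm_ne_zero_iff.mpr h0)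
    have hzl : φ z - φ l = ‖z - l‖ := by
      have h := hφ2
      rw [map_sub] at h
      simpa using h
    have hten : Filter.Tendsto (fun n => φ (u n) - φ (v n)) Filter.atTop
        (nhds (φ z - φ l)) := (hw φ).sub ((φ.continuous.tendsto l).comp hv)
    obtain ⟨N, hN⟩ := Metric.tendsto_atTop.mp hten ε hε
    refine ⟨N, fun n hn => ?_⟩
    have h1 := hN n hn
    rw [Real.dist_eq] at h1
    have h2 : φ z - φ l - ε ≤ φ (u n) - φ (v n) := by
      have h2' := abs_lt.mp h1
      linarith [h2'.1]
    have h3 : φ (u n) - φ (v n) ≤ ‖u n - v n‖ := by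
      have h4 : φ (u n) - φ (v n) = φ (u n - v n) := by rw [map_sub]
      have h5 := φ.le_opNorm (u n - v n)
      rw [hφ1, one_mul] at h5
      calc φ (u n) - φ (v n) = φ (u n - v n) := h4
        _ ≤ |φ (u n - v n)| := le_abs_self _
        _ ≤ ‖u n - v n‖ := by rw [← Real.norm_eq_abs]; exact h5
    linarith

private lemma coercive_lb {E : Type*} [NormedAddCommGroup E]
    {X : Set E} {f : E → E} {c R : ℝ}
    (hgrow : ∀ x ∈ X, R ≤ ‖x‖ → ‖f x‖ ≤ c * ‖x‖)
    {x : E} (y : E) (hx : x ∈ X) (hRx : R ≤ ‖x‖) :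
    (1 - 2*c) * ‖x‖ - ‖y‖ ≤ ‖x - f x‖ - ‖y - f x‖ := by
  have h1 : ‖x‖ - ‖f x‖ ≤ ‖x - f x‖ := norm_sub_norm_le x (f x)
  have h2 : ‖y - f x‖ ≤ ‖y‖ + ‖f x‖ := norm_sub_le y (f x)
  have h3 := hgrow x hx hRx
  nlinarith

private lemma global_lb {E : Type*} [NormedAddCommGroup E]
    {X : Set E} {f : E → E} {c R : ℝ} (hc : c < 1/2) (hR : 0 < R)
    (hgrow : ∀ x ∈ X, R ≤ ‖x‖ → ‖f x‖ ≤ c * ‖x‖)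
    {x : E} (y : E) (hx : x ∈ X) :
    -(R + ‖y‖) ≤ ‖x - f x‖ - ‖y - f x‖ := by
  rcases le_or_gt R ‖x‖ with h | h
  · have := coercive_lb hgrow y hx h
    nlinarith [norm_nonneg x]
  · have h1 : ‖y - f x‖ ≤ ‖y - x‖ + ‖x - f x‖ := norm_sub_le_norm_sub_add_norm_sub y x (f x)
    have h2 : ‖y - x‖ ≤ ‖y‖ + ‖x‖ := norm_sub_le y x
    linarith

private lemma exists_min {E : Type*} [NormedAddCommGroup E] [NormedSpace ℝ E]
    (hrefl : ∀ u : ℕ → E, Bornology.IsBounded (Set.range u) →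
      ∃ (z : E) (σ : ℕ → ℕ), StrictMono σ ∧
        ∀ φ : E →L[ℝ] ℝ,
          Filter.Tendsto (fun n => φ (u (σ n))) Filter.atTop (nhds (φ z)))
    {X : Set E} (hclosed : IsClosed X) (hconv : Convex ℝ X)
    {f : E → E}
    (hwsc : ∀ x ∈ X, ∀ xn : ℕ → E, (∀ n, xn n ∈ X) →
      (∀ φ : E →L[ℝ] ℝ,
        Filter.Tendsto (fun n => φ (xn n)) Filter.atTop (nhds (φ x))) →
      Filter.Tendsto (fun n => f (xn n)) Filter.atTop (nhds (f x)))
    {c R : ℝ} (hc : c < 1/2) (hR : 0 < R)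
    (hgrow : ∀ x ∈ X, R ≤ ‖x‖ → ‖f x‖ ≤ c * ‖x‖)
    {y : E} (hy : y ∈ X) :
    ∃ z ∈ X, ∀ x ∈ X, ‖z - f z‖ - ‖y - f z‖ ≤ ‖x - f x‖ - ‖y - f x‖ := by
  have h2c : (0:ℝ) < 1 - 2*c := by linarith
  set S : Set ℝ := (fun x => ‖x - f x‖ - ‖y - f x‖) '' X with hS
  have hSne : S.Nonempty := ⟨_, y, hy, rfl⟩
  have hbdd : BddBelow S := by
    refine ⟨-(R + ‖y‖), ?_⟩
    rintro r ⟨x, hx, rfl⟩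
    exact global_lb hc hR hgrow y hx
  set m₀ : ℝ := sInf S with hm₀
  have hm₀le : ∀ x ∈ X, m₀ ≤ ‖x - f x‖ - ‖y - f x‖ := fun x hx =>
    csInf_le hbdd ⟨x, hx, rfl⟩
  have hm₀0 : m₀ ≤ 0 := by
    have h := hm₀le y hy
    simpa using h
  have hseq : ∀ n : ℕ, ∃ x, x ∈ X ∧ ‖x - f x‖ - ‖y - f x‖ < m₀ + 1/((n:ℝ)+1) := by
    intro n
    have hpos : (0:ℝ) < 1/((n:ℝ)+1) := by positivity
    obtain ⟨s, hs, hlt⟩ := exists_lt_of_csInf_lt hSne (lt_add_of_pos_right m₀ hpos)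
    obtain ⟨x, hx, rfl⟩ := hs
    exact ⟨x, hx, hlt⟩
  choose u huX hu using hseq
  have hub : ∀ n, ‖u n‖ ≤ max R ((1 + ‖y‖)/(1 - 2*c)) := by
    intro n
    rcases le_or_gt ‖u n‖ R with h | h
    · exact le_max_of_le_left h
    · refine le_max_of_le_right ?_
      rw [le_div_iff₀ h2c]
      have h1 := coercive_lb hgrow y (huX n) h.le
      have h2 := hu n
      have h3 : 1/((n:ℝ)+1) ≤ 1 := by
        rw [div_le_one (by positivity)]
        linarith [Nat.cast_nonneg (α := ℝ) n]
      nlinarith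
  have hbound : Bornology.IsBounded (Set.range u) := by
    refine (Metric.isBounded_closedBall (x := (0:E))
      (r := max R ((1 + ‖y‖)/(1 - 2*c)))).subset ?_
    rintro _ ⟨n, rfl⟩
    simpa [Metric.mem_closedBall, dist_zero_right] using hub n
  obtain ⟨z, σ, hσ, hwk⟩ := hrefl u hbound
  have hzX : z ∈ X := seq_weak_mem hclosed hconv (fun n => huX (σ n)) hwk
  have hfz : Filter.Tendsto (fun n => f (u (σ n))) Filter.atTop (nhds (f z)) :=
    hwsc z hzX (fun n => u (σ n)) (fun n => huX (σ n)) hwk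
  refine ⟨z, hzX, fun x hx => ?_⟩
  refine le_trans ?_ (hm₀le x hx)
  apply le_of_forall_pos_le_add
  intro ε hε
  have hε3 : (0:ℝ) < ε/3 := by linarith
  obtain ⟨N₁, h₁⟩ := seq_wlsc hwk hfz hε3
  obtain ⟨N₂, h₂⟩ := Metric.tendsto_atTop.mp hfz (ε/3) hε3
  obtain ⟨N₃, h₃⟩ := exists_nat_one_div_lt hε3
  set n := max N₁ (max N₂ N₃) with hn
  have hn1 : N₁ ≤ n := le_max_left _ _
  have hn2 : N₂ ≤ n := le_trans (le_max_left _ _) (le_max_right _ _)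
  have hn3 : N₃ ≤ n := le_trans (le_max_right _ _) (le_max_right _ _)
  have hA := h₁ n hn1
  have hB := h₂ n hn2
  rw [dist_eq_norm] at hB
  have hC := hu (σ n)
  have hσn : (n:ℝ) ≤ σ n := by exact_mod_cast hσ.le_apply
  have hD : 1/((σ n : ℝ)+1) ≤ 1/((N₃:ℝ)+1) := by
    apply one_div_le_one_div_of_le (by positivity)
    have : (N₃:ℝ) ≤ n := by exact_mod_cast hn3
    linarith
  have hE : 1/((σ n : ℝ)+1) < ε/3 := lt_of_le_of_lt hD h₃
  have hF : |‖y - f z‖ - ‖y - f (u (σ n))‖| ≤ ‖f (u (σ n)) - f z‖ := by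
    have := abs_norm_sub_norm_le (y - f z) (y - f (u (σ n)))
    have h7 : (y - f z) - (y - f (u (σ n))) = f (u (σ n)) - f z := by abel
    rwa [h7] at this
  have hF' := abs_le.mp hF
  linarith [hF'.1, hF'.2]


/-- main theorem: E a real reflexive Banach space (reflexivity is
expressed through its sequential consequence, Eberlein–Šmulian: every bounded
sequence has a weakly convergent subsequence), X ⊆ E closed, convex and
unbounded, f : X → X sequentially weakly-strongly continuous with
limsup_{‖x‖→∞} ‖f x‖/‖x‖ < 1/2, and for each y ∈ X the function
x ↦ ‖x − f x‖ − ‖y − f x‖ has at most one global minimum in X.  Then f has a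
unique fixed point x* ∈ X, and ‖x* − f x‖ < ‖x − f x‖ for all x ∈ X, x ≠ x*. -/
theorem stmt11 {E : Type*} [NormedAddCommGroup E] [NormedSpace ℝ E]
    [CompleteSpace E]
    (hrefl : ∀ u : ℕ → E, Bornology.IsBounded (Set.range u) →
      ∃ (z : E) (σ : ℕ → ℕ), StrictMono σ ∧
        ∀ φ : E →L[ℝ] ℝ,
          Filter.Tendsto (fun n => φ (u (σ n))) Filter.atTop (nhds (φ z)))
    (X : Set E) (hne : X.Nonempty) (hclosed : IsClosed X) (hconv : Convex ℝ X)
    (hunb : ¬ Bornology.IsBounded X)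
    (f : E → E) (hf : Set.MapsTo f X X)
    (hwsc : ∀ x ∈ X, ∀ xn : ℕ → E, (∀ n, xn n ∈ X) →
      (∀ φ : E →L[ℝ] ℝ,
        Filter.Tendsto (fun n => φ (xn n)) Filter.atTop (nhds (φ x))) →
      Filter.Tendsto (fun n => f (xn n)) Filter.atTop (nhds (f x)))
    (hgrowth : ∃ c < (1 : ℝ) / 2, ∃ R > (0 : ℝ),
      ∀ x ∈ X, R ≤ ‖x‖ → ‖f x‖ ≤ c * ‖x‖)
    (huniq : ∀ y ∈ X, ∀ x₁ ∈ X, ∀ x₂ ∈ X,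
      (∀ x ∈ X, ‖x₁ - f x₁‖ - ‖y - f x₁‖ ≤ ‖x - f x‖ - ‖y - f x‖) →
      (∀ x ∈ X, ‖x₂ - f x₂‖ - ‖y - f x₂‖ ≤ ‖x - f x‖ - ‖y - f x‖) →
      x₁ = x₂) :
    ∃! xs, xs ∈ X ∧ f xs = xs ∧
      ∀ x ∈ X, x ≠ xs → ‖xs - f x‖ < ‖x - f x‖ := by
  obtain ⟨c, hc, R, hR, hgrow⟩ := hgrowth
  obtain ⟨x₀, hx₀⟩ := hne
  have h2c : (0:ℝ) < 1 - 2*c := by linarith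
  set m : E → ℝ := fun y => sInf ((fun x => ‖x - f x‖ - ‖y - f x‖) '' X) with hm
  have hbddb : ∀ y : E, BddBelow ((fun x => ‖x - f x‖ - ‖y - f x‖) '' X) := by
    intro y
    refine ⟨-(R + ‖y‖), ?_⟩
    rintro r ⟨x, hx, rfl⟩
    exact global_lb hc hR hgrow y hx
  have hmle : ∀ y : E, ∀ x ∈ X, m y ≤ ‖x - f x‖ - ‖y - f x‖ := fun y x hx =>
    csInf_le (hbddb y) ⟨x, hx, rfl⟩
  have hm0 : ∀ y ∈ X, m y ≤ 0 := fun y hy => by simpa using hmle y y hy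
  have hatt : ∀ y ∈ X, ∃ z, z ∈ X ∧
      (∀ x ∈ X, ‖z - f z‖ - ‖y - f z‖ ≤ ‖x - f x‖ - ‖y - f x‖) ∧
      ‖z - f z‖ - ‖y - f z‖ = m y := by
    intro y hy
    obtain ⟨z, hzX, hzmin⟩ := exists_min hrefl hclosed hconv hwsc hc hR hgrow hy
    refine ⟨z, hzX, hzmin, le_antisymm ?_ (hmle y z hzX)⟩
    exact le_csInf ⟨_, y, hy, rfl⟩ (by rintro r ⟨x, hx, rfl⟩; exact hzmin x hx)
  set μ : ℝ := sSup (m '' X) with hμdef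
  have hbdda : BddAbove (m '' X) := ⟨0, by rintro r ⟨y, hy, rfl⟩; exact hm0 y hy⟩
  have hμ0 : μ ≤ 0 :=
    csSup_le ⟨m x₀, x₀, hx₀, rfl⟩ (by rintro r ⟨y, hy, rfl⟩; exact hm0 y hy)
  have hμge : ∀ y ∈ X, m y ≤ μ := fun y hy => le_csSup hbdda ⟨y, hy, rfl⟩
  -- maximizing sequence for m
  have himne : (m '' X).Nonempty := ⟨m x₀, x₀, hx₀, rfl⟩
  have hseqv : ∀ n : ℕ, ∃ y, y ∈ X ∧ μ - 1/((n:ℝ)+1) < m y := by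
    intro n
    have hpos : (0:ℝ) < 1/((n:ℝ)+1) := by positivity
    obtain ⟨a, ha, hlt⟩ := exists_lt_of_lt_csSup himne (sub_lt_self μ hpos)
    obtain ⟨y, hy, rfl⟩ := ha
    exact ⟨y, hy, hlt⟩
  choose v hvX hv using hseqv
  have hvb : ∀ n, ‖v n‖ ≤ ‖x₀ - f x₀‖ + ‖f x₀‖ - μ + 1 := by
    intro n
    have h1 := hmle (v n) x₀ hx₀
    have h2 : ‖v n‖ - ‖f x₀‖ ≤ ‖v n - f x₀‖ := norm_sub_norm_le _ _
    have h3 := hv n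
    have h4 : 1/((n:ℝ)+1) ≤ 1 := by
      rw [div_le_one (by positivity)]
      linarith [Nat.cast_nonneg (α := ℝ) n]
    linarith
  have hvbound : Bornology.IsBounded (Set.range v) := by
    refine (Metric.isBounded_closedBall (x := (0:E))
      (r := ‖x₀ - f x₀‖ + ‖f x₀‖ - μ + 1)).subset ?_
    rintro _ ⟨n, rfl⟩
    simpa [Metric.mem_closedBall, dist_zero_right] using hvb n
  obtain ⟨ys, σ, hσ, hwk⟩ := hrefl v hvbound
  have hysX : ys ∈ X := seq_weak_mem hclosed hconv (fun n => hvX (σ n)) hwk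
  -- m attains its sup at ys
  have hmys : m ys = μ := by
    refine le_antisymm (hμge ys hysX) ?_
    have h0 : ∀ x ∈ X, μ ≤ ‖x - f x‖ - ‖ys - f x‖ := by
      intro x hx
      apply le_of_forall_pos_le_add
      intro ε hε
      have hε3 : (0:ℝ) < ε/3 := by linarith
      obtain ⟨N₁, h₁⟩ := seq_wlsc hwk (tendsto_const_nhds (x := f x)) hε3
      obtain ⟨N₃, h₃⟩ := exists_nat_one_div_lt hε3
      set n := max N₁ N₃ with hn
      have hA := h₁ n (le_max_left _ _)
      have hC := hv (σ n)
      have hD := hmle (v (σ n)) x hx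
      have hσn : (n:ℝ) ≤ σ n := by exact_mod_cast hσ.le_apply
      have hE : 1/((σ n : ℝ)+1) ≤ 1/((N₃:ℝ)+1) := by
        apply one_div_le_one_div_of_le (by positivity)
        have : (N₃:ℝ) ≤ n := by exact_mod_cast le_max_right N₁ N₃
        linarith
      have hF : 1/((σ n : ℝ)+1) < ε/3 := lt_of_le_of_lt hE h₃
      linarith
    exact le_csInf ⟨_, ys, hysX, rfl⟩ (by rintro r ⟨x, hx, rfl⟩; exact h0 x hx)
  -- the minimizer for ys
  obtain ⟨zs, hzsX, hzsmin, hzsval⟩ := hatt ys hysX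
  have hwX : f zs ∈ X := hf hzsX
  set w : E := f zs with hwdef
  set t : ℕ → ℝ := fun n => 1/((n:ℝ)+1) with ht
  have ht0 : ∀ n, 0 < t n := fun n => by positivity
  have ht1 : ∀ n, t n ≤ 1 := by
    intro n
    show 1/((n:ℝ)+1) ≤ 1
    rw [div_le_one (by positivity)]
    linarith [Nat.cast_nonneg (α := ℝ) n]
  set yt : ℕ → E := fun n => (1 - t n) • ys + t n • w with hyt
  have hytX : ∀ n, yt n ∈ X := fun n =>
    hconv hysX hwX (by linarith [ht1 n]) (ht0 n).le (by ring)
  choose zt hztX hztmin hztval using fun n => hatt (yt n) (hytX n)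
  -- (e) : almost-minimality at ys
  have he : ∀ n, ‖zt n - f (zt n)‖ - ‖ys - f (zt n)‖ ≤ μ + t n * ‖w - ys‖ := by
    intro n
    have h1 : yt n - ys = t n • (w - ys) := by
      simp only [hyt, smul_sub, sub_smul, one_smul]
      abel
    have h2 : ‖yt n - f (zt n)‖ ≤ ‖yt n - ys‖ + ‖ys - f (zt n)‖ :=
      norm_sub_le_norm_sub_add_norm_sub _ _ _
    have h3 : ‖yt n - ys‖ = t n * ‖w - ys‖ := by
      rw [h1, norm_smul, Real.norm_eq_abs, abs_of_pos (ht0 n)]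
    have h4 : ‖zt n - f (zt n)‖ - ‖yt n - f (zt n)‖ ≤ μ := by
      rw [hztval n]
      exact hμge (yt n) (hytX n)
    linarith
  -- (d) : key concavity estimate
  have hd : ∀ n, ‖zt n - f (zt n)‖ - ‖w - f (zt n)‖ ≤ μ := by
    intro n
    have h1 : yt n - f (zt n) = (1 - t n) • (ys - f (zt n)) + t n • (w - f (zt n)) := by
      simp only [hyt, smul_sub, sub_smul, one_smul]
      abel
    have h2 : ‖yt n - f (zt n)‖ ≤
        (1 - t n) * ‖ys - f (zt n)‖ + t n * ‖w - f (zt n)‖ := by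
      rw [h1]
      refine (norm_add_le _ _).trans ?_
      rw [norm_smul, norm_smul, Real.norm_eq_abs, Real.norm_eq_abs,
        abs_of_nonneg (by linarith [ht1 n]), abs_of_pos (ht0 n)]
    have h3 : μ ≤ ‖zt n - f (zt n)‖ - ‖ys - f (zt n)‖ := by
      rw [← hmys]
      exact hmle ys (zt n) (hztX n)
    have h4 : ‖zt n - f (zt n)‖ - ‖yt n - f (zt n)‖ ≤ μ := by
      rw [hztval n]
      exact hμge (yt n) (hytX n)
    have h5 : (1 - t n) * μ ≤ (1 - t n) * (‖zt n - f (zt n)‖ - ‖ys - f (zt n)‖) :=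
      mul_le_mul_of_nonneg_left h3 (by linarith [ht1 n])
    have h6 : t n * (‖zt n - f (zt n)‖ - ‖w - f (zt n)‖) ≤ t n * μ := by nlinarith
    exact le_of_mul_le_mul_left h6 (ht0 n)
  -- boundedness of the zt
  have hztb : ∀ n, ‖zt n‖ ≤ max R ((‖ys‖ + ‖w‖)/(1 - 2*c)) := by
    intro n
    rcases le_or_gt ‖zt n‖ R with h | h
    · exact le_max_of_le_left h
    · refine le_max_of_le_right ?_
      rw [le_div_iff₀ h2c]
      have h1 := coercive_lb hgrow (yt n) (hztX n) h.le
      have h2 : ‖zt n - f (zt n)‖ - ‖yt n - f (zt n)‖ ≤ μ := by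
        rw [hztval n]
        exact hμge (yt n) (hytX n)
      have h3 : ‖yt n‖ ≤ ‖ys‖ + ‖w‖ := by
        show ‖(1 - t n) • ys + t n • w‖ ≤ _
        refine (norm_add_le _ _).trans ?_
        rw [norm_smul, norm_smul, Real.norm_eq_abs, Real.norm_eq_abs,
          abs_of_nonneg (by linarith [ht1 n]), abs_of_pos (ht0 n)]
        nlinarith [norm_nonneg ys, norm_nonneg w, ht0 n, ht1 n]
      nlinarith
  have hztbound : Bornology.IsBounded (Set.range zt) := by
    refine (Metric.isBounded_closedBall (x := (0:E))
      (r := max R ((‖ys‖ + ‖w‖)/(1 - 2*c)))).subset ?_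
    rintro _ ⟨n, rfl⟩
    simpa [Metric.mem_closedBall, dist_zero_right] using hztb n
  obtain ⟨xh, τ, hτ, hwk2⟩ := hrefl zt hztbound
  have hxhX : xh ∈ X := seq_weak_mem hclosed hconv (fun n => hztX (τ n)) hwk2
  have fconv2 : Filter.Tendsto (fun n => f (zt (τ n))) Filter.atTop (nhds (f xh)) :=
    hwsc xh hxhX (fun n => zt (τ n)) (fun n => hztX (τ n)) hwk2
  -- xh is a global minimizer for ys
  have hxhμ : ‖xh - f xh‖ - ‖ys - f xh‖ ≤ μ := by
    apply le_of_forall_pos_le_add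
    intro ε hε
    have hε4 : (0:ℝ) < ε/4 := by linarith
    have hK : (0:ℝ) ≤ ‖w - ys‖ := norm_nonneg _
    have hδ : (0:ℝ) < ε/(4*(‖w - ys‖+1)) := by positivity
    obtain ⟨N₁, h₁⟩ := seq_wlsc hwk2 fconv2 hε4
    obtain ⟨N₂, h₂⟩ := Metric.tendsto_atTop.mp fconv2 (ε/4) hε4
    obtain ⟨N₃, h₃⟩ := exists_nat_one_div_lt hδ
    set n := max N₁ (max N₂ N₃) with hn
    have hA := h₁ n (le_max_left _ _)
    have hB := h₂ n (le_trans (le_max_left _ _) (le_max_right _ _))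
    rw [dist_eq_norm] at hB
    have hE := he (τ n)
    have hτn : (n:ℝ) ≤ τ n := by exact_mod_cast hτ.le_apply
    have hD : t (τ n) ≤ 1/((N₃:ℝ)+1) := by
      show 1/((τ n : ℝ)+1) ≤ _
      apply one_div_le_one_div_of_le (by positivity)
      have : (N₃:ℝ) ≤ n := by exact_mod_cast le_trans (le_max_right N₂ N₃) (le_max_right _ _)
      linarith
    have hD2 : t (τ n) * ‖w - ys‖ ≤ ε/4 := by
      have h5 : t (τ n) < ε/(4*(‖w - ys‖+1)) := lt_of_le_of_lt hD h₃
      have h6 : t (τ n) * ‖w - ys‖ ≤ t (τ n) * (‖w - ys‖+1) :=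
        mul_le_mul_of_nonneg_left (by linarith) (ht0 (τ n)).le
      have h7 : t (τ n) * (‖w - ys‖+1) < ε/(4*(‖w - ys‖+1)) * (‖w - ys‖+1) :=
        mul_lt_mul_of_pos_right h5 (by linarith)
      have h8 : ε/(4*(‖w - ys‖+1)) * (‖w - ys‖+1) = ε/4 := by
        field_simp
      linarith
    have hF : |‖ys - f xh‖ - ‖ys - f (zt (τ n))‖| ≤ ‖f (zt (τ n)) - f xh‖ := by
      have h9 := abs_norm_sub_norm_le (ys - f xh) (ys - f (zt (τ n)))
      have h10 : (ys - f xh) - (ys - f (zt (τ n))) = f (zt (τ n)) - f xh := by abel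
      rwa [h10] at h9
    have hF' := abs_le.mp hF
    linarith [hF'.1, hF'.2]
  have hxhmin : ∀ x ∈ X, ‖xh - f xh‖ - ‖ys - f xh‖ ≤ ‖x - f x‖ - ‖ys - f x‖ := by
    intro x hx
    refine hxhμ.trans ?_
    rw [← hmys]
    exact hmle ys x hx
  have hzs_xh : zs = xh := huniq ys hysX zs hzsX xh hxhX hzsmin hxhmin
  have fconv3 : Filter.Tendsto (fun n => f (zt (τ n))) Filter.atTop (nhds w) := by
    rw [hwdef, hzs_xh]
    exact fconv2
  -- the defect at xh is at most μ
  have hxhh : ‖xh - f xh‖ ≤ μ := by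
    apply le_of_forall_pos_le_add
    intro ε hε
    have hε2 : (0:ℝ) < ε/2 := by linarith
    obtain ⟨N₁, h₁⟩ := seq_wlsc hwk2 fconv2 hε2
    obtain ⟨N₂, h₂⟩ := Metric.tendsto_atTop.mp fconv3 (ε/2) hε2
    set n := max N₁ N₂ with hn
    have hA := h₁ n (le_max_left _ _)
    have hB := h₂ n (le_max_right _ _)
    rw [dist_eq_norm] at hB
    have hD := hd (τ n)
    have hG : ‖w - f (zt (τ n))‖ ≤ ε/2 := by
      rw [show w - f (zt (τ n)) = -(f (zt (τ n)) - w) by abel, norm_neg]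
      exact hB.le
    linarith
  have hμzero : μ = 0 := le_antisymm hμ0 (le_trans (norm_nonneg _) hxhh)
  have hxhfix : f xh = xh := by
    have h1 : ‖xh - f xh‖ = 0 := le_antisymm (hμzero ▸ hxhh) (norm_nonneg _)
    have h2 := norm_sub_eq_zero_iff.mp h1
    exact h2.symm
  -- ys is itself a minimizer for ys
  have hysmin : ∀ x ∈ X, ‖ys - f ys‖ - ‖ys - f ys‖ ≤ ‖x - f x‖ - ‖ys - f x‖ := by
    intro x hx
    rw [sub_self]
    have := hmle ys x hx
    rw [hmys, hμzero] at this
    linarith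
  have hys_xh : ys = xh := huniq ys hysX ys hysX xh hxhX hysmin hxhmin
  have hysfix : f ys = ys := by rw [hys_xh]; exact hxhfix
  have hstrict : ∀ x ∈ X, x ≠ ys → ‖ys - f x‖ < ‖x - f x‖ := by
    intro x hx hxne
    by_contra hcon
    push_neg at hcon
    have h1 : ‖x - f x‖ - ‖ys - f x‖ ≤ 0 := by linarith
    have h2 : (0:ℝ) ≤ ‖x - f x‖ - ‖ys - f x‖ := by
      have := hmle ys x hx
      rw [hmys, hμzero] at this
      linarith
    have h3 : ∀ x' ∈ X, ‖x - f x‖ - ‖ys - f x‖ ≤ ‖x' - f x'‖ - ‖ys - f x'‖ := by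
      intro x' hx'
      have h4 := hmle ys x' hx'
      rw [hmys, hμzero] at h4
      linarith
    exact hxne (huniq ys hysX x hx ys hysX h3 hysmin)
  refine ⟨ys, ⟨hysX, hysfix, hstrict⟩, ?_⟩
  rintro y ⟨hyX, hyfix, -⟩
  by_contra hne'
  have h1 := hstrict y hyX hne'
  rw [hyfix, sub_self, norm_zero] at h1
  linarith [norm_nonneg (ys - y)]
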